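/- Let p, q be probability distributions on a finite alphabet with p strictly positive, and let q̂_t denote the KT estimator built from i.i.d. samples X_1, X_2, ... drawn from q. If q ≠ p, then almost surely the likelihood ratio process L_t = ∏_{i=1}^t q̂_i(X_i)/p(X_i) tends to infinity, and hence for every α ∈ (0,1) the stopping time τ = inf{t : L_t ≥ 1/α} is finite almost surely (the test has power one). -/

import Mathlib

open MeasureTheory Finset ProbabilityTheory

namespace KTaux
open Real Filter

lemma filter_card_succ {α} [DecidableEq α] (a : ℕ → α) (x : α) (t : ℕ) :
    ((range (t+1)).filter (fun j => a j = x)).card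
      = ((range t).filter (fun j => a j = x)).card + (if a t = x then 1 else 0) := by
  rw [Finset.range_add_one, Finset.filter_insert]
  split
  · rw [Finset.card_insert_of_notMem (by simp)]
  · simp

lemma prod_count_regroup {α} [Fintype α] [DecidableEq α] (a : ℕ → α) (c : ℕ → ℝ) (t : ℕ) :
    ∏ i ∈ range t, c (((range i).filter (fun j => a j = a i)).card)
      = ∏ x : α, ∏ k ∈ range (((range t).filter (fun j => a j = x)).card), c k := by
  induction t with
  | zero => simp
  | succ t ih =>
    rw [prod_range_succ, ih]
    have : ∀ x : α, ∏ k ∈ range (((range (t+1)).filter (fun j => a j = x)).card), c k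
        = (∏ k ∈ range (((range t).filter (fun j => a j = x)).card), c k)
          * (if a t = x then c (((range t).filter (fun j => a j = x)).card) else 1) := by
      intro x
      rw [filter_card_succ]
      split
      · rw [prod_range_succ]
      · simp
    simp only [this, Finset.prod_mul_distrib, Finset.prod_ite_eq]
    simp

lemma prod_val_regroup {α} [Fintype α] [DecidableEq α] (a : ℕ → α) (g : α → ℝ) (t : ℕ) :
    ∏ i ∈ range t, g (a i)
      = ∏ x : α, g x ^ (((range t).filter (fun j => a j = x)).card) := by
  induction t with
  | zero => simp
  | succ t ih =>
    rw [prod_range_succ, ih]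
    have : ∀ x : α, g x ^ (((range (t+1)).filter (fun j => a j = x)).card)
        = g x ^ (((range t).filter (fun j => a j = x)).card)
          * (if a t = x then g x else 1) := by
      intro x
      rw [filter_card_succ]
      split
      · rw [pow_succ]
      · simp
    simp only [this, Finset.prod_mul_distrib, Finset.prod_ite_eq]
    simp

lemma sum_count {α} [Fintype α] [DecidableEq α] (a : ℕ → α) (t : ℕ) :
    ∑ x : α, (((range t).filter (fun j => a j = x)).card) = t := by
  have := Finset.card_eq_sum_card_fiberwise (s := range t) (t := (univ : Finset α))
    (f := a) (fun j _ => mem_univ (a j))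
  simpa [Finset.card_range] using this.symm

lemma nat_pair (a b : ℕ) :
    (a+b).factorial * (a^a * b^b) ≤ (a.factorial * b.factorial) * (a+b)^(a+b) := by
  have hterm : a^a * b^((a+b)-a) * (a+b).choose a ≤ (a+b)^(a+b) := by
    rw [add_pow a b (a+b)]
    exact Finset.single_le_sum (f := fun k => a^k * b^((a+b)-k) * (a+b).choose k)
      (fun k _ => Nat.zero_le _) (by simp [Nat.lt_succ_iff])
  have hch : (a+b).choose a * a.factorial * b.factorial = (a+b).factorial := by
    have := Nat.choose_mul_factorial_mul_factorial (n := a+b) (k := a) (Nat.le_add_right a b)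
    simpa [Nat.add_sub_cancel_left] using this
  calc (a+b).factorial * (a^a * b^b)
      = (a^a * b^b * (a+b).choose a) * (a.factorial * b.factorial) := by
        rw [← hch]; ring
    _ ≤ (a+b)^(a+b) * (a.factorial * b.factorial) := by
        apply Nat.mul_le_mul_right
        simpa [Nat.add_sub_cancel_left] using hterm
    _ = (a.factorial * b.factorial) * (a+b)^(a+b) := by ring

lemma nat_multi {α} [DecidableEq α] (s : Finset α) (N : α → ℕ) :
    (∑ x ∈ s, N x).factorial * ∏ x ∈ s, (N x)^(N x)
      ≤ (∏ x ∈ s, (N x).factorial) * (∑ x ∈ s, N x)^(∑ x ∈ s, N x) := by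
  induction s using Finset.induction with
  | empty => simp
  | @insert y s hy ih =>
    rw [Finset.sum_insert hy, Finset.prod_insert hy, Finset.prod_insert hy]
    set a := N y
    set b := ∑ x ∈ s, N x
    set P := ∏ x ∈ s, (N x)^(N x)
    set F := ∏ x ∈ s, (N x).factorial
    have hbb : 0 < b^b := by rcases Nat.eq_zero_or_pos b with h | h; exacts [by simp [h], pow_pos h b]
    apply Nat.le_of_mul_le_mul_right _ hbb
    calc (a+b).factorial * (a^a * P) * b^b
        = ((a+b).factorial * (a^a * b^b)) * P := by ring
      _ ≤ ((a.factorial * b.factorial) * (a+b)^(a+b)) * P := Nat.mul_le_mul_right _ (nat_pair a b)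
      _ = a.factorial * (a+b)^(a+b) * (b.factorial * P) := by ring
      _ ≤ a.factorial * (a+b)^(a+b) * (F * b^b) := Nat.mul_le_mul_left _ ih
      _ = (a.factorial * F) * (a+b)^(a+b) * b^b := by ring
noncomputable def Snum (n : ℕ) : ℝ := ∏ k ∈ range n, ((k:ℝ) + 1/2)

lemma Snum_pos (n : ℕ) : 0 < Snum n := Finset.prod_pos fun k _ => by positivity

lemma Snum_sq (n : ℕ) (hn : 1 ≤ n) : ((n.factorial : ℝ))^2 ≤ 4 * n * (Snum n)^2 := by
  induction n, hn using Nat.le_induction with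
  | base => simp [Snum]; norm_num
  | succ n hn ih =>
    have hstep : Snum (n+1) = Snum n * ((n:ℝ)+1/2) := Finset.prod_range_succ _ _
    have h1 : ((n+1).factorial : ℝ) = ((n:ℝ)+1) * (n.factorial : ℝ) := by
      push_cast [Nat.factorial_succ]; ring
    have hs := (Snum_pos n).le
    have hn1 : (1:ℝ) ≤ (n:ℝ) := by exact_mod_cast hn
    rw [hstep, h1]
    push_cast
    nlinarith [mul_le_mul_of_nonneg_left ih (by positivity : (0:ℝ) ≤ ((n:ℝ)+1)^2),
      sq_nonneg (Snum n), mul_nonneg (sq_nonneg (Snum n)) (by linarith : (0:ℝ) ≤ (n:ℝ))]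

lemma log_Snum (n : ℕ) :
    Real.log n.factorial - Real.log 2 - (1/2) * Real.log n ≤ Real.log (Snum n) := by
  rcases Nat.eq_zero_or_pos n with h | h
  · subst h
    simp [Snum]
    exact Real.log_nonneg one_le_two
  · have hsq := Snum_sq n h
    have hlog := Real.log_le_log (by positivity) hsq
    have hn0 : (0:ℝ) < (n:ℝ) := by exact_mod_cast h
    rw [Real.log_pow, Real.log_mul (by positivity) (pow_ne_zero 2 (ne_of_gt (Snum_pos n))),
      Real.log_mul (by norm_num) (ne_of_gt hn0), Real.log_pow] at hlog
    have h4 : Real.log 4 = 2 * Real.log 2 := by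
      rw [show (4:ℝ) = 2^2 by norm_num, Real.log_pow]; push_cast; ring
    push_cast at hlog
    linarith

lemma harmonic_le (t : ℕ) : ∑ i ∈ range t, (1:ℝ)/((i:ℝ)+1) ≤ 1 + Real.log t := by
  induction t with
  | zero => simp
  | succ t ih =>
    rcases Nat.eq_zero_or_pos t with h | h
    · subst h; simp
    · have ht : (0:ℝ) < (t:ℝ) := by exact_mod_cast h
      rw [Finset.sum_range_succ]
      have key : (1:ℝ)/((t:ℝ)+1) ≤ Real.log ((t:ℝ)+1) - Real.log t := by
        have h1 : Real.log ((t:ℝ)/((t:ℝ)+1)) ≤ (t:ℝ)/((t:ℝ)+1) - 1 :=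
          Real.log_le_sub_one_of_pos (by positivity)
        rw [Real.log_div (by positivity) (by positivity)] at h1
        have h2 : (t:ℝ)/((t:ℝ)+1) - 1 = -(1/((t:ℝ)+1)) := by field_simp; ring
        linarith [h1, h2.le]
      push_cast
      linarith

lemma log_den_le (c : ℝ) (hc : 0 < c) (t : ℕ) :
    Real.log (∏ i ∈ range t, ((i:ℝ) + c)) ≤ Real.log t.factorial + c * (1 + Real.log t) := by
  rw [Real.log_prod (fun i _ => by positivity)]
  have hfac : Real.log (t.factorial : ℝ) = ∑ i ∈ range t, Real.log ((i:ℝ)+1) := by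
    rw [← Real.log_prod (fun i _ => by positivity)]
    congr 1
    rw [← Finset.prod_range_add_one_eq_factorial]
    push_cast
    rfl
  have hterm : ∀ i ∈ range t,
      Real.log ((i:ℝ)+c) ≤ Real.log ((i:ℝ)+1) + c * (1/((i:ℝ)+1)) := by
    intro i _
    have h1 : Real.log (((i:ℝ)+c)/((i:ℝ)+1)) ≤ ((i:ℝ)+c)/((i:ℝ)+1) - 1 :=
      Real.log_le_sub_one_of_pos (by positivity)
    rw [Real.log_div (by positivity) (by positivity)] at h1
    have h2 : ((i:ℝ)+c)/((i:ℝ)+1) - 1 = (c-1)/((i:ℝ)+1) := by field_simp; ring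
    have h3 : (c-1)/((i:ℝ)+1) ≤ c * (1/((i:ℝ)+1)) := by
      rw [mul_one_div]
      apply div_le_div_of_nonneg_right ?_ (by positivity)
      linarith
    linarith [h1, h2.le]
  calc ∑ i ∈ range t, Real.log ((i:ℝ)+c)
      ≤ ∑ i ∈ range t, (Real.log ((i:ℝ)+1) + c * (1/((i:ℝ)+1))) := Finset.sum_le_sum hterm
    _ = Real.log t.factorial + c * ∑ i ∈ range t, (1:ℝ)/((i:ℝ)+1) := by
        rw [Finset.sum_add_distrib, hfac, Finset.mul_sum]
    _ ≤ Real.log t.factorial + c * (1 + Real.log t) := by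
        have := harmonic_le t
        nlinarith [harmonic_le t]

lemma gibbs {α} [Fintype α] (q p : α → ℝ) (hqnn : ∀ x, 0 ≤ q x) (hqsum : ∑ x, q x = 1)
    (hppos : ∀ x, 0 < p x) (hpsum : ∑ x, p x = 1) (hqp : q ≠ p) :
    0 < ∑ x, q x * (Real.log (q x) - Real.log (p x)) := by
  have key : ∑ x, q x * (Real.log (p x) - Real.log (q x)) < ∑ x, (p x - q x) := by
    apply Finset.sum_lt_sum
    · intro x _
      rcases eq_or_lt_of_le (hqnn x) with h | h
      · rw [← h]
        simpa using (hppos x).le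
      · have h1 : Real.log (p x / q x) ≤ p x / q x - 1 :=
          Real.log_le_sub_one_of_pos (div_pos (hppos x) h)
        rw [Real.log_div (ne_of_gt (hppos x)) (ne_of_gt h)] at h1
        have h2 : q x * (p x / q x - 1) = p x - q x := by field_simp
        nlinarith [mul_le_mul_of_nonneg_left h1 h.le]
    · obtain ⟨x0, hx0⟩ := Function.ne_iff.mp hqp
      refine ⟨x0, Finset.mem_univ _, ?_⟩
      rcases eq_or_lt_of_le (hqnn x0) with h | h
      · rw [← h]
        simpa using hppos x0
      · have hne : p x0 / q x0 ≠ 1 := by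
          intro heq
          rw [div_eq_one_iff_eq (ne_of_gt h)] at heq
          exact hx0 heq.symm
        have h1 : Real.log (p x0 / q x0) < p x0 / q x0 - 1 :=
          Real.log_lt_sub_one_of_pos (div_pos (hppos x0) h) hne
        rw [Real.log_div (ne_of_gt (hppos x0)) (ne_of_gt h)] at h1
        have h2 : q x0 * (p x0 / q x0 - 1) = p x0 - q x0 := by field_simp
        nlinarith [mul_lt_mul_of_pos_left h1 h]
  rw [Finset.sum_sub_distrib, hpsum, hqsum, sub_self] at key
  have hneg : ∑ x, q x * (Real.log (q x) - Real.log (p x))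
      = -∑ x, q x * (Real.log (p x) - Real.log (q x)) := by
    rw [← Finset.sum_neg_distrib]
    exact Finset.sum_congr rfl fun x _ => by ring
  linarith [key, hneg.le]
lemma pow_self_pos (n : ℕ) : 0 < n^n := by
  rcases Nat.eq_zero_or_pos n with h | h; exacts [by simp [h], pow_pos h n]

lemma log_multi {α} [Fintype α] [DecidableEq α] (N : α → ℕ) (t : ℕ) (ht : ∑ x, N x = t) :
    Real.log t.factorial - ∑ x, Real.log ((N x).factorial : ℝ)
      ≤ (t:ℝ) * Real.log t - ∑ x, (N x : ℝ) * Real.log (N x) := by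
  have h := nat_multi (univ : Finset α) N
  rw [ht] at h
  have h1 : (0:ℕ) < t.factorial * ∏ x, (N x)^(N x) :=
    Nat.mul_pos t.factorial_pos (Finset.prod_pos fun x _ => pow_self_pos _)
  have hlog := Real.log_le_log (by exact_mod_cast h1) (by exact_mod_cast h : 
    ((t.factorial * ∏ x, (N x)^(N x) : ℕ) : ℝ) ≤ ((∏ x, (N x).factorial) * t^t : ℕ))
  rw [Nat.cast_mul, Nat.cast_mul, Nat.cast_prod, Nat.cast_prod, Nat.cast_pow,
    Real.log_mul (by exact_mod_cast t.factorial_pos.ne') (by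
      apply ne_of_gt; apply Finset.prod_pos; intro x _; exact_mod_cast pow_self_pos (N x)),
    Real.log_mul (by
      apply ne_of_gt; apply Finset.prod_pos; intro x _; exact_mod_cast (N x).factorial_pos) (by
      apply ne_of_gt; exact_mod_cast pow_self_pos t),
    Real.log_prod (fun x _ => by exact_mod_cast (pow_self_pos (N x)).ne'),
    Real.log_prod (fun x _ => by exact_mod_cast (N x).factorial_pos.ne'),
    Real.log_pow] at hlog
  have hexp : ∀ x : α, Real.log ((N x ^ N x : ℕ) : ℝ) = (N x : ℝ) * Real.log (N x) := by
    intro x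
    rw [Nat.cast_pow, Real.log_pow]
  simp only [hexp] at hlog
  linarith
lemma slln_freq (m : ℕ)
    {Ω : Type*} {m0 : MeasurableSpace Ω} {μ : Measure Ω} [IsProbabilityMeasure μ]
    (X : ℕ → Ω → Fin m) (hX : ∀ n, Measurable (X n))
    (hiid : iIndepFun X μ)
    (q : Fin m → ℝ)
    (hdist : ∀ (n : ℕ) (x : Fin m), (μ {ω | X n ω = x}).toReal = q x) :
    ∀ᵐ ω ∂μ, ∀ x : Fin m, Filter.Tendsto
      (fun t : ℕ => ((((range t).filter (fun j => X j ω = x)).card : ℝ))/t)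
      Filter.atTop (nhds (q x)) := by
  have hident : ∀ n, IdentDistrib (X n) (X 0) μ μ := by
    intro n
    refine ⟨(hX n).aemeasurable, (hX 0).aemeasurable, ?_⟩
    apply MeasureTheory.Measure.ext_of_singleton
    intro x
    rw [Measure.map_apply (hX n) (measurableSet_singleton x),
      Measure.map_apply (hX 0) (measurableSet_singleton x)]
    have h1 : X n ⁻¹' {x} = {ω | X n ω = x} := rfl
    have h2 : X 0 ⁻¹' {x} = {ω | X 0 ω = x} := rfl
    rw [h1, h2]
    have := (hdist n x).trans (hdist 0 x).symm
    exact (ENNReal.toReal_eq_toReal_iff' (measure_ne_top μ _) (measure_ne_top μ _)).mp this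
  rw [ae_all_iff]
  intro x
  set g : Fin m → ℝ := fun y => if y = x then 1 else 0 with hg_def
  have hg : Measurable g := measurable_of_countable g
  set Y : ℕ → Ω → ℝ := fun n => g ∘ X n with hY_def
  have hYind : ∀ n, Y n = Set.indicator (X n ⁻¹' {x}) (fun _ => (1:ℝ)) := by
    intro n
    funext ω
    by_cases h : X n ω = x <;> simp [hY_def, hg_def, Set.indicator, Set.mem_preimage, h]
  have hint : Integrable (Y 0) μ := by
    rw [hYind 0]
    exact (integrable_const (1:ℝ)).indicator ((hX 0) (measurableSet_singleton x))
  have hpair : Pairwise (Function.onFun (fun f g => IndepFun f g μ) Y) :=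
    fun i j hij => (hiid.indepFun hij).comp hg hg
  have hid : ∀ n, IdentDistrib (Y n) (Y 0) μ μ := fun n => (hident n).comp hg
  have hslln := ProbabilityTheory.strong_law_ae Y hint hpair hid
  have hEY : ∫ ω, Y 0 ω ∂μ = q x := by
    rw [hYind 0, MeasureTheory.integral_indicator_const (1:ℝ) ((hX 0) (measurableSet_singleton x))]
    rw [smul_eq_mul, mul_one]
    exact hdist 0 x
  rw [hEY] at hslln
  filter_upwards [hslln] with ω hω
  have hconv : ∀ t : ℕ, ((((range t).filter (fun j => X j ω = x)).card : ℝ))/t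
      = (t:ℝ)⁻¹ • ∑ i ∈ range t, Y i ω := by
    intro t
    have hsum : ∑ i ∈ range t, Y i ω
        = ((((range t).filter (fun j => X j ω = x)).card : ℝ)) := by
      rw [Finset.card_filter]
      push_cast
      exact Finset.sum_congr rfl fun i _ => by
        by_cases h : X i ω = x <;> simp [hY_def, hg_def, h]
    rw [hsum, smul_eq_mul, inv_mul_eq_div]
  simpa only [hconv] using hω

end KTaux

theorem kt_test_power_one (m : ℕ) (hm : 1 ≤ m)
    {Ω : Type*} {m0 : MeasurableSpace Ω} {μ : Measure Ω} [IsProbabilityMeasure μ]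
    (X : ℕ → Ω → Fin m) (hX : ∀ n, Measurable (X n))
    (hiid : iIndepFun X μ)
    (q p : Fin m → ℝ)
    (hqnn : ∀ x, 0 ≤ q x) (hqsum : ∑ x, q x = 1)
    (hppos : ∀ x, 0 < p x) (hpsum : ∑ x, p x = 1)
    (hdist : ∀ (n : ℕ) (x : Fin m), (μ {ω | X n ω = x}).toReal = q x)
    (hqp : q ≠ p)
    (L : ℕ → Ω → ℝ)
    -- `L t = ∏_{i<t} q̂_i(X_i)/p(X_i)`, with KT estimator built from the previous samples
    (hL : ∀ t ω, L t ω = ∏ i ∈ Finset.range t,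
      (((((Finset.range i).filter (fun j => X j ω = X i ω)).card : ℝ) + 1/2) / (i + m/2))
        / p (X i ω)) :
    ∀ᵐ ω ∂μ, Filter.Tendsto (fun t => L t ω) Filter.atTop Filter.atTop ∧
      ∀ α : ℝ, 0 < α → α < 1 → ∃ t : ℕ, 1 / α ≤ L t ω := by
  classical
  have hm1 : (1:ℝ) ≤ (m:ℝ) := by exact_mod_cast hm
  set D : ℝ := ∑ x, q x * (Real.log (q x) - Real.log (p x)) with hD_def
  have hDpos : 0 < D := KTaux.gibbs q p hqnn hqsum hppos hpsum hqp
  filter_upwards [KTaux.slln_freq m X hX hiid q hdist] with ω hfreq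
  set N : ℕ → Fin m → ℕ := fun t x => ((range t).filter (fun j => X j ω = x)).card
    with hN_def
  have hNsum : ∀ t, ∑ x, N t x = t := fun t => KTaux.sum_count (fun i => X i ω) t
  have hNle : ∀ t x, N t x ≤ t := fun t x =>
    le_trans (Finset.card_filter_le _ _) (le_of_eq (Finset.card_range t))
  set Den : ℕ → ℝ := fun t => ∏ i ∈ range t, ((i:ℝ) + (m:ℝ)/2) with hDen_def
  have hm2 : (0:ℝ) < (m:ℝ)/2 := by linarith
  have hDenpos : ∀ t, 0 < Den t := fun t => Finset.prod_pos fun i _ => by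
    have : (0:ℝ) ≤ (i:ℝ) := Nat.cast_nonneg i
    linarith
  have hLt : ∀ t, L t ω = (∏ x, KTaux.Snum (N t x)) / (Den t * ∏ x, p x ^ N t x) := by
    intro t
    rw [hL t ω, Finset.prod_div_distrib, Finset.prod_div_distrib, div_div]
    congr 1
    · exact KTaux.prod_count_regroup (fun i => X i ω) (fun k => (k:ℝ) + 1/2) t
    congr 1
    exact KTaux.prod_val_regroup (fun i => X i ω) p t
  have hLpos : ∀ t, 0 < L t ω := by
    intro t
    rw [hLt t]
    exact div_pos (Finset.prod_pos fun x _ => KTaux.Snum_pos _)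
      (mul_pos (hDenpos t) (Finset.prod_pos fun x _ => pow_pos (hppos x) _))
  have hlogL : ∀ t, Real.log (L t ω)
      = (∑ x, Real.log (KTaux.Snum (N t x)))
        - (Real.log (Den t) + ∑ x, (N t x : ℝ) * Real.log (p x)) := by
    intro t
    rw [hLt t,
      Real.log_div (ne_of_gt (Finset.prod_pos fun x _ => KTaux.Snum_pos _))
        (ne_of_gt (mul_pos (hDenpos t) (Finset.prod_pos fun x _ => pow_pos (hppos x) _))),
      Real.log_mul (ne_of_gt (hDenpos t))
        (ne_of_gt (Finset.prod_pos fun x _ => pow_pos (hppos x) _)),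
      Real.log_prod (fun x _ => (KTaux.Snum_pos _).ne'),
      Real.log_prod (fun x _ => (pow_pos (hppos x) _).ne')]
    simp only [Real.log_pow]
  set G : ℕ → ℝ := fun t => ∑ x, (((N t x:ℝ)/t) * Real.log ((N t x:ℝ)/t)
      - ((N t x:ℝ)/t) * Real.log (p x)) with hG_def
  have hGtend : Filter.Tendsto G Filter.atTop (nhds D) := by
    have hD2 : D = ∑ x, (q x * Real.log (q x) - q x * Real.log (p x)) :=
      Finset.sum_congr rfl fun x _ => by ring
    rw [hD2, hG_def]
    apply tendsto_finset_sum
    intro x _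
    have h1 : Filter.Tendsto (fun t : ℕ => ((N t x:ℝ)/t) * Real.log ((N t x:ℝ)/t))
        Filter.atTop (nhds (q x * Real.log (q x))) := by
      have := (Real.continuous_mul_log.tendsto (q x)).comp (hfreq x)
      exact this
    exact h1.sub ((hfreq x).mul_const (Real.log (p x)))
  set Cst : ℝ := (m:ℝ) * Real.log 2 + (m:ℝ)/2 with hCst_def
  have hkey : ∀ t : ℕ, 1 ≤ t →
      (t:ℝ) * G t - (m:ℝ) * Real.log t - Cst ≤ Real.log (L t ω) := by
    intro t ht
    have htR : (1:ℝ) ≤ (t:ℝ) := by exact_mod_cast ht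
    have ht0 : (t:ℝ) ≠ 0 := by linarith
    have hlogt : 0 ≤ Real.log t := Real.log_nonneg htR
    have h2 : Real.log (Den t) ≤ Real.log t.factorial + (m:ℝ)/2 * (1 + Real.log t) :=
      KTaux.log_den_le ((m:ℝ)/2) hm2 t
    have h3 : Real.log t.factorial - ∑ x, Real.log ((N t x).factorial : ℝ)
        ≤ (t:ℝ)*Real.log t - ∑ x, (N t x:ℝ) * Real.log (N t x) :=
      KTaux.log_multi (N t) t (hNsum t)
    have h4 : ∀ x : Fin m, Real.log ((N t x : ℕ) : ℝ) ≤ Real.log t := by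
      intro x
      rcases Nat.eq_zero_or_pos (N t x) with h | h
      · simp only [h, Nat.cast_zero, Real.log_zero]; exact hlogt
      · exact Real.log_le_log (by exact_mod_cast h) (by exact_mod_cast hNle t x)
    have hsum1 : (∑ x, Real.log ((N t x).factorial : ℝ))
        - (m:ℝ) * Real.log 2 - ∑ x, (1/2) * Real.log ((N t x : ℕ) : ℝ)
        ≤ ∑ x, Real.log (KTaux.Snum (N t x)) := by
      have := Finset.sum_le_sum (f := fun x : Fin m =>
          Real.log ((N t x).factorial : ℝ) - Real.log 2 - (1/2) * Real.log ((N t x : ℕ) : ℝ))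
        (g := fun x : Fin m => Real.log (KTaux.Snum (N t x)))
        (fun x (_ : x ∈ univ) => KTaux.log_Snum (N t x))
      rw [Finset.sum_sub_distrib, Finset.sum_sub_distrib, Finset.sum_const,
        Finset.card_univ, Fintype.card_fin, nsmul_eq_mul] at this
      exact this
    have hsum4 : ∑ x, (1/2) * Real.log ((N t x : ℕ) : ℝ) ≤ (m:ℝ)/2 * Real.log t := by
      calc ∑ x, (1/2) * Real.log ((N t x : ℕ) : ℝ)
          ≤ ∑ x : Fin m, (1/2) * Real.log t :=
            Finset.sum_le_sum fun x _ => by linarith [h4 x]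
        _ = (m:ℝ)/2 * Real.log t := by
            rw [Finset.sum_const, Finset.card_univ, Fintype.card_fin, nsmul_eq_mul]
            ring
    have hGt : (t:ℝ) * G t = ∑ x, (N t x:ℝ) * Real.log (N t x)
        - (t:ℝ)*Real.log t - ∑ x, (N t x:ℝ) * Real.log (p x) := by
      have hterm : ∀ x : Fin m, (t:ℝ) * (((N t x:ℝ)/t) * Real.log ((N t x:ℝ)/t)
            - ((N t x:ℝ)/t) * Real.log (p x))
          = ((N t x:ℝ) * Real.log (N t x) - (N t x:ℝ) * Real.log t)
            - (N t x:ℝ) * Real.log (p x) := by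
        intro x
        rcases Nat.eq_zero_or_pos (N t x) with h | h
        · simp [h]
        · have hNx : ((N t x : ℕ):ℝ) ≠ 0 := by
            exact_mod_cast h.ne'
          rw [Real.log_div hNx ht0]
          field_simp
      have hcast : ∑ x, ((N t x : ℕ) : ℝ) = (t:ℝ) := by exact_mod_cast hNsum t
      calc (t:ℝ) * G t = ∑ x, (t:ℝ) * (((N t x:ℝ)/t) * Real.log ((N t x:ℝ)/t)
            - ((N t x:ℝ)/t) * Real.log (p x)) := by rw [hG_def, Finset.mul_sum]
        _ = ∑ x, (((N t x:ℝ) * Real.log (N t x) - (N t x:ℝ) * Real.log t)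
            - (N t x:ℝ) * Real.log (p x)) := Finset.sum_congr rfl fun x _ => hterm x
        _ = ∑ x, (N t x:ℝ) * Real.log (N t x)
            - (t:ℝ)*Real.log t - ∑ x, (N t x:ℝ) * Real.log (p x) := by
            rw [Finset.sum_sub_distrib, Finset.sum_sub_distrib, ← Finset.sum_mul, hcast]
    rw [hlogL t, hGt, hCst_def]
    linarith [hsum1, h2, h3, hsum4]
  clear_value N Den G Cst D
  have hGD : ∀ᶠ t : ℕ in Filter.atTop, D/2 ≤ G t :=
    hGtend.eventually (eventually_ge_nhds (by linarith))
  have hmne : (m:ℝ) ≠ 0 := by linarith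
  have hlittle : ∀ᶠ t : ℕ in Filter.atTop, (m:ℝ) * Real.log t ≤ D/4 * t := by
    have hc : (0:ℝ) < D/(4*(m:ℝ)) := div_pos hDpos (by linarith)
    have h1 := Asymptotics.isLittleO_iff.mp Real.isLittleO_log_id_atTop hc
    have h2 := (tendsto_natCast_atTop_atTop (R := ℝ)).eventually h1
    filter_upwards [h2, Filter.eventually_ge_atTop 1] with t ht ht1
    have htR : (0:ℝ) ≤ (t:ℝ) := Nat.cast_nonneg t
    rw [Real.norm_eq_abs, id_eq, Real.norm_eq_abs, abs_of_nonneg htR] at ht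
    have hlogle : Real.log t ≤ D/(4*(m:ℝ)) * t := le_trans (le_abs_self _) ht
    calc (m:ℝ) * Real.log t ≤ (m:ℝ) * (D/(4*(m:ℝ)) * t) :=
          mul_le_mul_of_nonneg_left hlogle (by linarith)
      _ = D/4 * t := by field_simp
  have hfinal : ∀ᶠ t : ℕ in Filter.atTop, D/4 * (t:ℝ) - Cst ≤ Real.log (L t ω) := by
    filter_upwards [hGD, hlittle, Filter.eventually_ge_atTop 1] with t h5 h6 h7
    have hk := hkey t h7
    have htR : (0:ℝ) ≤ (t:ℝ) := Nat.cast_nonneg t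
    have hGge : (t:ℝ) * (D/2) ≤ (t:ℝ) * G t := mul_le_mul_of_nonneg_left h5 htR
    have hring : (t:ℝ) * (D/2) - D/4*(t:ℝ) = D/4*(t:ℝ) := by ring
    linarith [hk, hGge, h6, hring]
  have htendlog : Filter.Tendsto (fun t : ℕ => Real.log (L t ω))
      Filter.atTop Filter.atTop := by
    apply Filter.tendsto_atTop_mono' _ hfinal
    have hmul : Filter.Tendsto (fun t : ℕ => D/4 * (t:ℝ)) Filter.atTop Filter.atTop :=
      (tendsto_natCast_atTop_atTop (R := ℝ)).const_mul_atTop (by linarith)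
    simpa [sub_eq_add_neg] using Filter.tendsto_atTop_add_const_right Filter.atTop (-Cst) hmul
  have htend : Filter.Tendsto (fun t => L t ω) Filter.atTop Filter.atTop := by
    have heq : (fun t : ℕ => L t ω) = fun t => Real.exp (Real.log (L t ω)) :=
      funext fun t => (Real.exp_log (hLpos t)).symm
    rw [heq]
    exact Real.tendsto_exp_atTop.comp htendlog
  exact ⟨htend, fun α hα hα1 => (htend.eventually_ge_atTop (1/α)).exists⟩
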